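/- Fix n ≥ 1, a real n×n matrix A₀ with zero diagonal, and a finite set F of ordered pairs (i,j) with i ≠ j (each pair representing a directed edge j → i). Set A(ε) = A₀ + ε·Σ_{(i,j)∈F} E_ij, and let L(ε) = D(ε) − A(ε) be the Laplacian, where D(ε) is the diagonal matrix with D(ε)_ii = Σ_j A(ε)_ij. Suppose ξ : ℝ → ℝⁿ, y : ℝ → ℝⁿ, and κ : ℝ → ℝ are differentiable at 0 and satisfy, for all ε in a neighborhood of 0: ξ(ε)ᵀ L(ε) = 0, 𝟏ᵀ ξ(ε) = 1, ξ(ε) is entrywise positive, ((Ξ(ε)L(ε) + L(ε)ᵀΞ(ε))/2)·y(ε) = κ(ε)·Ξ(ε)·y(ε), and y(ε)ᵀ Ξ(ε) y(ε) = 1, where Ξ(ε) = diag(ξ(ε)). Then, writing ξ = ξ(0), y = y(0), κ = κ(0), L = L(0), and Ξ′ = diag(ξ′(0)), the derivative of κ at 0 equals κ′(0) = Σ_{(i,j)∈F} ξ_i · y_i · (y_i − y_j) + yᵀ Ξ′ (L − κ·I) y. -/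

import Mathlib

open Matrix Filter

/-- First-order perturbation formula for the generalized algebraic connectivity κ
under an edge-weight perturbation supported on a directed edge set F:
κ′(0) equals the directed cut-energy term plus the stationary redistribution term. -/
theorem stmt1 (n : ℕ) (hn : 1 ≤ n)
    (A₀ : Matrix (Fin n) (Fin n) ℝ) (hA₀ : ∀ i, A₀ i i = 0)
    (F : Finset (Fin n × Fin n)) (hF : ∀ p ∈ F, p.1 ≠ p.2)
    (A : ℝ → Matrix (Fin n) (Fin n) ℝ)
    (hA : ∀ ε, A ε = A₀ + ε • ∑ p ∈ F, Matrix.single p.1 p.2 (1 : ℝ))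
    (L : ℝ → Matrix (Fin n) (Fin n) ℝ)
    (hL : ∀ ε, L ε = Matrix.diagonal (fun i => ∑ j, A ε i j) - A ε)
    (ξ y : ℝ → Fin n → ℝ) (ξ' y' : Fin n → ℝ) (κ : ℝ → ℝ) (κ' : ℝ)
    (hξd : ∀ i, HasDerivAt (fun ε => ξ ε i) (ξ' i) 0)
    (hyd : ∀ i, HasDerivAt (fun ε => y ε i) (y' i) 0)
    (hκd : HasDerivAt κ κ' 0)
    (hstat : ∀ᶠ ε in nhds (0 : ℝ), (L ε)ᵀ *ᵥ ξ ε = 0)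
    (hnorm1 : ∀ᶠ ε in nhds (0 : ℝ), ∑ i, ξ ε i = 1)
    (hpos : ∀ᶠ ε in nhds (0 : ℝ), ∀ i, 0 < ξ ε i)
    (heig : ∀ᶠ ε in nhds (0 : ℝ),
      (((1 : ℝ)/2) • (Matrix.diagonal (ξ ε) * L ε + (L ε)ᵀ * Matrix.diagonal (ξ ε))) *ᵥ y ε
        = κ ε • (Matrix.diagonal (ξ ε) *ᵥ y ε))
    (hnorm2 : ∀ᶠ ε in nhds (0 : ℝ), y ε ⬝ᵥ (Matrix.diagonal (ξ ε) *ᵥ y ε) = 1) :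
    κ' = (∑ p ∈ F, ξ 0 p.1 * y 0 p.1 * (y 0 p.1 - y 0 p.2))
        + y 0 ⬝ᵥ ((Matrix.diagonal ξ' * (L 0 - κ 0 • 1)) *ᵥ y 0) := by
  classical
  set B : Matrix (Fin n) (Fin n) ℝ := ∑ p ∈ F, Matrix.single p.1 p.2 (1 : ℝ) with hB
  set C : Matrix (Fin n) (Fin n) ℝ :=
    Matrix.diagonal (fun i => ∑ k, B i k) - B with hC
  -- entrywise affine formula for L
  have hLentry : ∀ ε i j, L ε i j = L 0 i j + ε * C i j := by
    intro ε i j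
    simp only [hL, hA, hC, Matrix.sub_apply, Matrix.add_apply, Matrix.smul_apply,
      smul_eq_mul, Matrix.diagonal_apply]
    by_cases h : i = j
    · subst h
      simp [Finset.sum_add_distrib, ← Finset.mul_sum]
      ring
    · simp [h]
      ring
  -- derivative of each entry of L
  have hLd : ∀ i j, HasDerivAt (fun ε => L ε i j) (C i j) 0 := by
    intro i j
    have h : HasDerivAt (fun ε : ℝ => L 0 i j + ε * C i j) (C i j) 0 := by
      simpa using ((hasDerivAt_id (0:ℝ)).mul_const (C i j)).const_add (L 0 i j)
    exact h.congr_of_eventuallyEq (Eventually.of_forall fun ε => hLentry ε i j)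
  -- entrywise value of the symmetrized matrix
  have hM : ∀ ε (a b : Fin n),
      (((1 : ℝ)/2) • (Matrix.diagonal (ξ ε) * L ε + (L ε)ᵀ * Matrix.diagonal (ξ ε))) a b
        = (1/2) * (ξ ε a * L ε a b + L ε b a * ξ ε b) := by
    intro ε a b
    simp [Matrix.smul_apply, Matrix.add_apply, Matrix.diagonal_mul, Matrix.mul_diagonal,
      Matrix.transpose_apply]
  -- the scalar function g whose derivative computes κ'
  set g : ℝ → ℝ := fun ε => ∑ i, ∑ j, ξ ε i * (L ε i j * (y ε i * y ε j)) with hg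
  set G : ℝ := ∑ i, ∑ j,
      (ξ' i * (L 0 i j * (y 0 i * y 0 j)) +
        ξ 0 i * (C i j * (y 0 i * y 0 j) + L 0 i j * (y' i * y 0 j + y 0 i * y' j))) with hG
  have hgd : HasDerivAt g G 0 := by
    apply HasDerivAt.fun_sum
    intro i _
    apply HasDerivAt.fun_sum
    intro j _
    exact (hξd i).mul ((hLd i j).mul ((hyd i).mul (hyd j)))
  -- g eventually equals κ
  have hgk : g =ᶠ[nhds (0:ℝ)] κ := by
    filter_upwards [heig, hnorm2] with ε h1 h2
    have h3 : y ε ⬝ᵥ ((((1 : ℝ)/2) • (Matrix.diagonal (ξ ε) * L ε + (L ε)ᵀ * Matrix.diagonal (ξ ε))) *ᵥ y ε)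
        = y ε ⬝ᵥ (κ ε • (Matrix.diagonal (ξ ε) *ᵥ y ε)) := by rw [h1]
    rw [dotProduct_smul, h2, smul_eq_mul, mul_one] at h3
    show g ε = κ ε
    rw [← h3]
    simp only [hg, Matrix.mulVec, dotProduct, hM, Finset.mul_sum]
    have h4 : ∀ a b : Fin n, y ε a * ((1:ℝ)/2 * (ξ ε a * L ε a b + L ε b a * ξ ε b) * y ε b)
        = (1/2) * (ξ ε a * (L ε a b * (y ε a * y ε b)))
          + (1/2) * (ξ ε b * (L ε b a * (y ε b * y ε a))) := fun a b => by ring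
    simp only [h4, Finset.sum_add_distrib]
    have h6 : ∑ a : Fin n, ∑ b : Fin n, (1:ℝ)/2 * (ξ ε b * (L ε b a * (y ε b * y ε a)))
        = ∑ a : Fin n, ∑ b : Fin n, (1:ℝ)/2 * (ξ ε a * (L ε a b * (y ε a * y ε b))) :=
      Finset.sum_comm
    rw [h6, ← Finset.sum_add_distrib]
    refine Finset.sum_congr rfl fun a _ => ?_
    rw [← Finset.sum_add_distrib]
    refine Finset.sum_congr rfl fun b _ => ?_
    ring
  have hκG : κ' = G := hκd.unique (hgd.congr_of_eventuallyEq hgk.symm)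
  -- eigen-equation at ε = 0, componentwise
  have e0 : ∀ i, ∑ j, (ξ 0 i * L 0 i j + L 0 j i * ξ 0 j) * y 0 j
      = 2 * (κ 0 * (ξ 0 i * y 0 i)) := by
    intro i
    have h1 := heig.self_of_nhds
    have h2 := congrFun h1 i
    simp only [Matrix.mulVec, dotProduct, hM, Pi.smul_apply, smul_eq_mul,
      Matrix.diagonal_apply, ite_mul, zero_mul, Finset.sum_ite_eq, Finset.mem_univ,
      if_true] at h2
    have h3 : ∑ j, (1:ℝ)/2 * ((ξ 0 i * L 0 i j + L 0 j i * ξ 0 j) * y 0 j)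
        = κ 0 * (ξ 0 i * y 0 i) := by
      rw [← h2]
      exact Finset.sum_congr rfl fun j _ => by ring
    rw [← Finset.mul_sum] at h3
    linarith
  -- normalization at order 1
  have hhd : HasDerivAt (fun ε => ∑ i, ξ ε i * (y ε i * y ε i))
      (∑ i, (ξ' i * (y 0 i * y 0 i) + ξ 0 i * (y' i * y 0 i + y 0 i * y' i))) 0 := by
    apply HasDerivAt.fun_sum
    intro i _
    exact (hξd i).mul ((hyd i).mul (hyd i))
  have hnev : (fun ε => ∑ i, ξ ε i * (y ε i * y ε i)) =ᶠ[nhds (0:ℝ)] fun _ => (1:ℝ) := by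
    filter_upwards [hnorm2] with ε h2
    simp only [dotProduct, Matrix.mulVec_diagonal] at h2
    rw [← h2]
    exact Finset.sum_congr rfl fun i _ => by ring
  have hH0 : ∑ i, (ξ' i * (y 0 i * y 0 i) + ξ 0 i * (y' i * y 0 i + y 0 i * y' i)) = 0 :=
    ((hasDerivAt_const (0:ℝ) (1:ℝ)).unique (hhd.congr_of_eventuallyEq hnev.symm)).symm
  -- sum against B reduces to a sum over F
  have hBsum : ∀ f : Fin n → Fin n → ℝ,
      ∑ i, ∑ j, B i j * f i j = ∑ p ∈ F, f p.1 p.2 := by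
    intro f
    have h1 : ∀ i j : Fin n, B i j * f i j
        = ∑ p ∈ F, (if p.1 = i ∧ p.2 = j then f i j else 0) := by
      intro i j
      rw [hB]
      simp only [Matrix.sum_apply, Finset.sum_mul, Matrix.single, Matrix.of_apply,
        ite_mul, one_mul, zero_mul]
    simp only [h1]
    rw [Finset.sum_congr rfl fun i (_ : i ∈ Finset.univ) => Finset.sum_comm, Finset.sum_comm]
    refine Finset.sum_congr rfl fun p _ => ?_
    simp [ite_and, Finset.sum_ite_eq]
  -- the cut-energy term
  have hT2 : ∑ i, ∑ j, ξ 0 i * (C i j * (y 0 i * y 0 j))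
      = ∑ p ∈ F, ξ 0 p.1 * y 0 p.1 * (y 0 p.1 - y 0 p.2) := by
    have h1 : ∀ i j : Fin n, ξ 0 i * (C i j * (y 0 i * y 0 j))
        = (if i = j then (∑ k, B i k) * (ξ 0 i * (y 0 i * y 0 j)) else 0)
          - B i j * (ξ 0 i * (y 0 i * y 0 j)) := by
      intro i j
      rw [hC]
      simp only [Matrix.sub_apply, Matrix.diagonal_apply]
      by_cases h : i = j <;> simp [h] <;> ring
    simp only [h1, Finset.sum_sub_distrib, Finset.sum_ite_eq, Finset.mem_univ, if_true]
    have h2 : ∑ i, (∑ k, B i k) * (ξ 0 i * (y 0 i * y 0 i))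
        = ∑ p ∈ F, ξ 0 p.1 * (y 0 p.1 * y 0 p.1) := by
      rw [← hBsum fun i _ => ξ 0 i * (y 0 i * y 0 i)]
      exact Finset.sum_congr rfl fun i _ => by rw [Finset.sum_mul]
    rw [h2, hBsum fun i j => ξ 0 i * (y 0 i * y 0 j), ← Finset.sum_sub_distrib]
    exact Finset.sum_congr rfl fun p _ => by ring
  -- the cross term
  have hT3 : ∑ i, ∑ j, ξ 0 i * (L 0 i j * (y' i * y 0 j + y 0 i * y' j))
      = - (κ 0 * ∑ i, ξ' i * (y 0 i * y 0 i)) := by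
    have s1 : ∀ i j : Fin n, ξ 0 i * (L 0 i j * (y' i * y 0 j + y 0 i * y' j))
        = ξ 0 i * (L 0 i j * (y' i * y 0 j)) + ξ 0 i * (L 0 i j * (y 0 i * y' j)) :=
      fun i j => by ring
    simp only [s1, Finset.sum_add_distrib]
    have s2 : ∑ i : Fin n, ∑ j : Fin n, ξ 0 i * (L 0 i j * (y 0 i * y' j))
        = ∑ i : Fin n, ∑ j : Fin n, ξ 0 j * (L 0 j i * (y 0 j * y' i)) := Finset.sum_comm
    rw [s2, ← Finset.sum_add_distrib]
    have s3 : ∑ i : Fin n, (∑ j, ξ 0 i * (L 0 i j * (y' i * y 0 j))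
          + ∑ j, ξ 0 j * (L 0 j i * (y 0 j * y' i)))
        = ∑ i, y' i * (2 * (κ 0 * (ξ 0 i * y 0 i))) := by
      refine Finset.sum_congr rfl fun i _ => ?_
      rw [← e0 i, Finset.mul_sum, ← Finset.sum_add_distrib]
      exact Finset.sum_congr rfl fun j _ => by ring
    rw [s3]
    have s4 : ∑ i, ξ 0 i * (y' i * y 0 i + y 0 i * y' i)
        = - ∑ i, ξ' i * (y 0 i * y 0 i) := by
      rw [Finset.sum_add_distrib] at hH0
      linarith
    have s5 : ∑ i, y' i * (2 * (κ 0 * (ξ 0 i * y 0 i)))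
        = κ 0 * ∑ i, ξ 0 i * (y' i * y 0 i + y 0 i * y' i) := by
      rw [Finset.mul_sum]
      exact Finset.sum_congr rfl fun i _ => by ring
    rw [s5, s4]
    ring
  -- expansion of the right-hand dot product
  have hRHS : y 0 ⬝ᵥ ((Matrix.diagonal ξ' * (L 0 - κ 0 • 1)) *ᵥ y 0)
      = (∑ i, ∑ j, ξ' i * (L 0 i j * (y 0 i * y 0 j))) - κ 0 * ∑ i, ξ' i * (y 0 i * y 0 i) := by
    have h1 : ∀ i j : Fin n, y 0 i * ((Matrix.diagonal ξ' * (L 0 - κ 0 • 1)) i j * y 0 j)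
        = ξ' i * (L 0 i j * (y 0 i * y 0 j))
          - (if i = j then κ 0 * (ξ' i * (y 0 i * y 0 j)) else 0) := by
      intro i j
      rw [Matrix.diagonal_mul]
      simp only [Matrix.sub_apply, Matrix.smul_apply, Matrix.one_apply, smul_eq_mul]
      by_cases h : i = j <;> simp [h] <;> ring
    simp only [Matrix.mulVec, dotProduct, Finset.mul_sum, h1,
      Finset.sum_sub_distrib, Finset.sum_ite_eq, Finset.mem_univ, if_true]
  -- put everything together
  have split : ∀ i j : Fin n,
      (ξ' i * (L 0 i j * (y 0 i * y 0 j)) +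
        ξ 0 i * (C i j * (y 0 i * y 0 j) + L 0 i j * (y' i * y 0 j + y 0 i * y' j)))
      = ξ' i * (L 0 i j * (y 0 i * y 0 j)) + (ξ 0 i * (C i j * (y 0 i * y 0 j))
          + ξ 0 i * (L 0 i j * (y' i * y 0 j + y 0 i * y' j))) := fun i j => by ring
  rw [hκG, hG]
  simp only [split, Finset.sum_add_distrib]
  rw [hT2, hT3, hRHS]
  ring
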